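/- Let f : ℝⁿ → ℝⁿ be a C¹ vector field with complete flow Φ, and let φ : ℝⁿ → ℝ be a continuous function that is forward flow-coherent: for all x₁, x₂ with φ(x₁) = φ(x₂) and all t ≥ 0, φ(Φ(t, x₁)) = φ(Φ(t, x₂)). Let p be a singular point of f (f(p) = 0). Then the level set φ⁻¹(φ(p)) is positively invariant as a level set: for every x with φ(x) = φ(p) and every t ≥ 0, φ(Φ(t, x)) = φ(p). Moreover, if φ is continuously differentiable, then the Lie derivative ψ(x) = ⟨∇φ(x), f(x)⟩ vanishes at every point x of the level set φ⁻¹(φ(p)). -/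

import Mathlib

open scoped RealInnerProductSpace
open Set

/-- If `φ` is continuous and forward flow-coherent and `p` is a singular
point of `f`, then the level set `φ⁻¹(φ(p))` is positively invariant as a level set;
moreover, if `φ` is continuously differentiable then the Lie derivative
`ψ(x) = ⟪∇φ(x), f(x)⟫` vanishes on that level set. -/
theorem stmt_4 {n : ℕ}
    (f : EuclideanSpace ℝ (Fin n) → EuclideanSpace ℝ (Fin n))
    (hf : ContDiff ℝ 1 f)
    (Φ : ℝ → EuclideanSpace ℝ (Fin n) → EuclideanSpace ℝ (Fin n))
    (hΦ0 : ∀ x, Φ 0 x = x)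
    (hΦ : ∀ (t : ℝ) (x : EuclideanSpace ℝ (Fin n)),
      HasDerivAt (fun s => Φ s x) (f (Φ t x)) t)
    (φ : EuclideanSpace ℝ (Fin n) → ℝ)
    (hφcont : Continuous φ)
    (hcoh : ∀ x₁ x₂, φ x₁ = φ x₂ → ∀ t ≥ (0 : ℝ), φ (Φ t x₁) = φ (Φ t x₂))
    (p : EuclideanSpace ℝ (Fin n)) (hp : f p = 0) :
    (∀ x, φ x = φ p → ∀ t ≥ (0 : ℝ), φ (Φ t x) = φ p) ∧
      (ContDiff ℝ 1 φ → ∀ x, φ x = φ p → ⟪gradient φ x, f x⟫ = 0) := by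
  -- The flow fixes the singular point `p`.
  have hc : Continuous (fun t => Φ t p) := by
    apply continuous_iff_continuousAt.2
    exact fun t => (hΦ t p).continuousAt
  have key : ∀ t : ℝ, Φ t p = p := by
    have hclopen : IsClopen {t : ℝ | Φ t p = p} := by
      constructor
      · exact isClosed_eq hc continuous_const
      · rw [isOpen_iff_mem_nhds]
        intro t₀ ht₀
        simp only [mem_setOf_eq] at ht₀
        obtain ⟨K, s, hs, hK⟩ := (hf.contDiffAt (x := p)).exists_lipschitzOnWith
        have hnear : ∀ᶠ t in nhds t₀, Φ t p ∈ s :=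
          hc.continuousAt.preimage_mem_nhds (by rw [ht₀]; exact hs)
        obtain ⟨ε, hε, hball⟩ := Metric.eventually_nhds_iff_ball.1 hnear
        have huniq : EqOn (fun t => Φ t p) (fun _ => p) (Ioo (t₀ - ε) (t₀ + ε)) := by
          apply ODE_solution_unique_of_mem_Ioo (v := fun _ => f) (s := fun _ => s)
            (fun _ _ => hK) (t₀ := t₀) (by simp [hε])
          · intro t ht
            refine ⟨hΦ t p, hball t ?_⟩
            rw [Real.ball_eq_Ioo]; exact ht
          · intro t ht
            refine ⟨?_, mem_of_mem_nhds hs⟩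
            simpa [hp] using hasDerivAt_const t p
          · exact ht₀
        filter_upwards [Ioo_mem_nhds (show t₀ - ε < t₀ by linarith) (show t₀ < t₀ + ε by linarith)] with t ht
        exact huniq ht
    rcases isClopen_iff.1 hclopen with h | h
    · exact absurd (show (0:ℝ) ∈ {t : ℝ | Φ t p = p} from hΦ0 p) (by simp [h])
    · intro t; have : t ∈ {t : ℝ | Φ t p = p} := h ▸ mem_univ t
      exact this
  have inv : ∀ x, φ x = φ p → ∀ t ≥ (0 : ℝ), φ (Φ t x) = φ p := by
    intro x hx t ht
    rw [hcoh x p hx t ht, key t]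
  refine ⟨inv, fun hφ x hx => ?_⟩
  -- Lie derivative along the level set
  have hφd := (hφ.differentiable one_ne_zero x).hasFDerivAt
  have hd : HasDerivAt (fun t => φ (Φ t x)) (fderiv ℝ φ x (f x)) 0 := by
    have := ((hφ.differentiable one_ne_zero (Φ 0 x)).hasFDerivAt).comp_hasDerivAt 0 (hΦ 0 x)
    simp only [hΦ0 x] at this; exact this
  have hconst : HasDerivWithinAt (fun t => φ (Φ t x)) 0 (Ici 0) 0 := by
    apply (hasDerivWithinAt_const (0:ℝ) (Ici (0:ℝ)) (φ p)).congr
    · intro t ht; exact inv x hx t ht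
    · simp [hΦ0 x, hx]
  have h0 : fderiv ℝ φ x (f x) = 0 :=
    (uniqueDiffOn_Ici (0:ℝ) 0 self_mem_Ici).eq_deriv _ hd.hasDerivWithinAt hconst
  rw [gradient, InnerProductSpace.toDual_symm_apply]
  exact h0
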